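/- The limiting random variable X_{∞,r} satisfies the distributional fixed-point equation X_{∞,r} =_D (X_{∞,r}^{(r)} + 1)·B(X_{∞,r}^{(r)} + 1), and Y_{∞,r} satisfies Y_{∞,r} =_D ((Y_{∞,r}+1)·B(Y_{∞,r}+1))^{(r)}. -/

import Mathlib

open scoped ENNReal

/-- Law of `(j+1)·B(j+1)` : takes value `j+1` with probability `1/(j+1)` and `0` otherwise. -/
noncomputable def Bstep (j : ℕ) : PMF ℕ :=
  (PMF.bernoulli ((j + 1 : NNReal))⁻¹
      (inv_le_one_of_one_le₀ (by exact_mod_cast Nat.one_le_iff_ne_zero.mpr (Nat.succ_ne_zero j)))).map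
    (fun b => if b then j + 1 else 0)

/-- Law of the sum of `r` i.i.d. copies of a random variable with law `p`
(the `r`-fold convolution). -/
noncomputable def conv : ℕ → PMF ℕ → PMF ℕ
  | 0, _ => PMF.pure 0
  | r + 1, p => (conv r p).bind fun a => p.map fun b => a + b

/-- The sequence `X_{d,r}`: `X_{0,r} = 1` and
`X_{d,r} = (X_{d-1,r}^{(r)} + 1)·B(X_{d-1,r}^{(r)} + 1)`. -/
noncomputable def Xd : ℕ → ℕ → PMF ℕ
  | 0, _ => PMF.pure 1
  | d + 1, r => (conv r (Xd d r)).bind Bstep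

/-- The sequence `Y_{d,r}`: `Y_{0,r} = 0` and
`Y_{d,r} = ((Y_{d-1,r} + 1)·B(Y_{d-1,r} + 1))^{(r)}`. -/
noncomputable def Yd : ℕ → ℕ → PMF ℕ
  | 0, _ => PMF.pure 0
  | d + 1, r => conv r ((Yd d r).bind Bstep)


open Filter

open MeasureTheory in
/-- Scheffé-type lemma in `ℝ≥0∞`: if probability mass functions `q n` converge pointwise to
a probability mass function `p`, and the `[0,1]`-valued weights `f n` converge pointwise to `g`,
then `∑' a, q n a * f n a → ∑' a, p a * g a`. -/
lemma scheffe (q : ℕ → ℕ → ℝ≥0∞) (p : ℕ → ℝ≥0∞)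
    (hq : ∀ n, ∑' a, q n a = 1) (hp : ∑' a, p a = 1)
    (hlim : ∀ a, Tendsto (fun n => q n a) atTop (nhds (p a)))
    (f : ℕ → ℕ → ℝ≥0∞) (g : ℕ → ℝ≥0∞)
    (hf : ∀ n a, f n a ≤ 1)
    (hflim : ∀ a, Tendsto (fun n => f n a) atTop (nhds (g a))) :
    Tendsto (fun n => ∑' a, q n a * f n a) atTop (nhds (∑' a, p a * g a)) := by
  have hple : ∀ a, p a ≤ 1 := fun a => hp ▸ ENNReal.le_tsum a
  have hpne : ∀ a, p a ≠ ∞ := fun a => (lt_of_le_of_lt (hple a) ENNReal.one_lt_top).ne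
  have hpcount : ∫⁻ a, p a ∂Measure.count = 1 := by rw [lintegral_count]; exact hp
  have hg : ∀ a, g a ≤ 1 := fun a => le_of_tendsto (hflim a) (Eventually.of_forall fun n => hf n a)
  set L := ∑' a, p a * g a with hL
  have hLle : L ≤ 1 := by
    rw [← hp]; exact ENNReal.tsum_le_tsum fun a =>
      (mul_le_mul_right (hg a) _).trans (by rw [mul_one])
  have hLne : L ≠ ∞ := (lt_of_le_of_lt hLle ENNReal.one_lt_top).ne
  -- A n : total "deficit" mass
  set A : ℕ → ℝ≥0∞ := fun n => ∑' a, (p a - q n a) with hAdef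
  have hA0 : Tendsto A atTop (nhds 0) := by
    have : Tendsto (fun n => ∫⁻ a, (p a - q n a) ∂Measure.count) atTop
        (nhds (∫⁻ _ : ℕ, (0 : ℝ≥0∞) ∂Measure.count)) := by
      refine tendsto_lintegral_of_dominated_convergence p
        (fun n => measurable_of_countable _) (fun n => ae_of_all _ fun a => tsub_le_self)
        (by rw [hpcount]; exact ENNReal.one_ne_top) (ae_of_all _ fun a => ?_)
      have := ENNReal.Tendsto.sub (tendsto_const_nhds (x := p a)) (hlim a) (Or.inl (hpne a))
      simpa using this
    simpa [lintegral_count] using this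
  -- B n = A n : total "excess" mass equals the deficit, since both sides have total mass 1.
  have hBA : ∀ n, (∑' a, (q n a - p a)) = A n := by
    intro n
    have hmax : ∀ a, q n a + (p a - q n a) = p a + (q n a - p a) := by
      intro a
      rcases le_total (p a) (q n a) with h | h
      · rw [tsub_eq_zero_of_le h, add_zero, add_tsub_cancel_of_le h]
      · rw [tsub_eq_zero_of_le h, add_zero, add_tsub_cancel_of_le h]
    have hsum : (∑' a, q n a) + A n = (∑' a, p a) + ∑' a, (q n a - p a) := by
      rw [hAdef, ← ENNReal.tsum_add, ← ENNReal.tsum_add]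
      exact tsum_congr hmax
    rw [hq n, hp] at hsum
    exact ((ENNReal.add_right_inj ENNReal.one_ne_top).mp hsum).symm
  -- C n : intermediate sums
  set C : ℕ → ℝ≥0∞ := fun n => ∑' a, p a * f n a with hCdef
  have hC : Tendsto C atTop (nhds L) := by
    have : Tendsto (fun n => ∫⁻ a, p a * f n a ∂Measure.count) atTop
        (nhds (∫⁻ a, p a * g a ∂Measure.count)) := by
      refine tendsto_lintegral_of_dominated_convergence p
        (fun n => measurable_of_countable _)
        (fun n => ae_of_all _ fun a => (mul_le_mul_right (hf n a) _).trans (by rw [mul_one]))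
        (by rw [hpcount]; exact ENNReal.one_ne_top)
        (ae_of_all _ fun a => ENNReal.Tendsto.const_mul (hflim a) (Or.inr (hpne a)))
    simpa [lintegral_count] using this
  -- two-sided bounds
  have hub : ∀ n, (∑' a, q n a * f n a) ≤ C n + A n := by
    intro n
    calc (∑' a, q n a * f n a)
        ≤ ∑' a, (p a * f n a + (q n a - p a)) := by
          refine ENNReal.tsum_le_tsum fun a => ?_
          calc q n a * f n a ≤ (p a + (q n a - p a)) * f n a :=
                mul_le_mul_left (le_add_tsub) _
            _ = p a * f n a + (q n a - p a) * f n a := by rw [add_mul]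
            _ ≤ p a * f n a + (q n a - p a) := by
                exact add_le_add_right ((mul_le_mul_right (hf n a) _).trans (by rw [mul_one])) _
      _ = C n + A n := by rw [ENNReal.tsum_add, hBA n]
  have hlb : ∀ n, C n ≤ (∑' a, q n a * f n a) + A n := by
    intro n
    calc C n ≤ ∑' a, (q n a * f n a + (p a - q n a)) := by
          refine ENNReal.tsum_le_tsum fun a => ?_
          calc p a * f n a ≤ (q n a + (p a - q n a)) * f n a :=
                mul_le_mul_left (le_add_tsub) _
            _ = q n a * f n a + (p a - q n a) * f n a := by rw [add_mul]
            _ ≤ q n a * f n a + (p a - q n a) := by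
                exact add_le_add_right ((mul_le_mul_right (hf n a) _).trans (by rw [mul_one])) _
      _ = (∑' a, q n a * f n a) + A n := by rw [ENNReal.tsum_add]
  -- squeeze
  have hlow : Tendsto (fun n => C n - A n) atTop (nhds L) := by
    have := ENNReal.Tendsto.sub hC hA0 (Or.inl hLne)
    simpa using this
  have hhigh : Tendsto (fun n => C n + A n) atTop (nhds L) := by
    have := Tendsto.add hC hA0
    simpa using this
  refine tendsto_of_tendsto_of_tendsto_of_le_of_le hlow hhigh
    (fun n => tsub_le_iff_right.mpr (hlb n)) hub

/-- Pointwise convergence of PMFs is preserved by `bind`. -/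
lemma tendsto_bind_pmf (q : ℕ → PMF ℕ) (p : PMF ℕ) (f : ℕ → PMF ℕ)
    (h : ∀ a, Tendsto (fun n => q n a) atTop (nhds (p a))) (k : ℕ) :
    Tendsto (fun n => (q n).bind f k) atTop (nhds (p.bind f k)) := by
  simp only [PMF.bind_apply]
  exact scheffe (fun n => q n) p (fun n => (q n).tsum_coe) p.tsum_coe h
    (fun _ a => f a k) (fun a => f a k) (fun _ a => (f a).coe_le_one k)
    (fun a => tendsto_const_nhds)

/-- Pointwise convergence of PMFs is preserved by the `r`-fold convolution. -/
lemma tendsto_conv_pmf (r : ℕ) (q : ℕ → PMF ℕ) (p : PMF ℕ)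
    (h : ∀ a, Tendsto (fun n => q n a) atTop (nhds (p a))) :
    ∀ k, Tendsto (fun n => conv r (q n) k) atTop (nhds (conv r p k)) := by
  induction r with
  | zero => intro k; simp only [conv]; exact tendsto_const_nhds
  | succ r ih =>
    intro k
    simp only [conv, PMF.bind_apply]
    refine scheffe (fun n => conv r (q n)) (conv r p)
      (fun n => (conv r (q n)).tsum_coe) (conv r p).tsum_coe ih
      (fun n a => ((q n).map fun b => a + b) k) (fun a => (p.map fun b => a + b) k)
      (fun n a => ((q n).map _).coe_le_one k) (fun a => ?_)
    -- inner map converges pointwise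
    have : ∀ (s : PMF ℕ), (s.map fun b => a + b) = s.bind fun b => PMF.pure (a + b) := by
      intro s; rfl
    simp only [this]
    exact tendsto_bind_pmf q p (fun b => PMF.pure (a + b)) h k

/-- The limiting random variables `X_{∞,r}` and `Y_{∞,r}` satisfy the distributional
fixed-point equations `X_∞ =_D (X_∞^{(r)}+1)·B(X_∞^{(r)}+1)` and
`Y_∞ =_D ((Y_∞+1)·B(Y_∞+1))^{(r)}`. -/
theorem fixed_point_Xinf_Yinf (r : ℕ) (hr : 2 ≤ r) :
    (∀ pX : PMF ℕ, (∀ k, Tendsto (fun d => Xd d r k) atTop (nhds (pX k))) →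
      pX = (conv r pX).bind Bstep) ∧
    (∀ pY : PMF ℕ, (∀ k, Tendsto (fun d => Yd d r k) atTop (nhds (pY k))) →
      pY = conv r (pY.bind Bstep)) := by
  constructor
  · intro pX h
    have key : ∀ k, Tendsto (fun d => Xd (d + 1) r k) atTop
        (nhds (((conv r pX).bind Bstep) k)) := by
      intro k
      have hconv := tendsto_conv_pmf r (fun d => Xd d r) pX h
      exact tendsto_bind_pmf (fun d => conv r (Xd d r)) (conv r pX) Bstep hconv k
    have key2 : ∀ k, Tendsto (fun d => Xd (d + 1) r k) atTop (nhds (pX k)) := by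
      intro k
      exact (h k).comp (tendsto_add_atTop_nat 1)
    ext k
    exact tendsto_nhds_unique (key2 k) (key k)
  · intro pY h
    have key : ∀ k, Tendsto (fun d => Yd (d + 1) r k) atTop
        (nhds ((conv r (pY.bind Bstep)) k)) := by
      intro k
      have hbind := fun a => tendsto_bind_pmf (fun d => Yd d r) pY Bstep h a
      exact tendsto_conv_pmf r (fun d => (Yd d r).bind Bstep) (pY.bind Bstep) hbind k
    have key2 : ∀ k, Tendsto (fun d => Yd (d + 1) r k) atTop (nhds (pY k)) := by
      intro k
      exact (h k).comp (tendsto_add_atTop_nat 1)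
    ext k
    exact tendsto_nhds_unique (key2 k) (key k)
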